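/- Let Δ ≥ 4 be an integer and let T be a tree on n vertices with maximum degree exactly Δ, where Δ divides n. Then the penalty P(T) = Σ_{uv ∈ E(T)} F(d(u), d(v)) satisfies P(T) ≥ F(Δ,Δ) = 2(4Δ−6)/Δ + Δ² − 6Δ + 3 + 6/Δ; equivalently, σ(T) = Σ_{uv ∈ E(T)} (d(u) − d(v))² ≤ (4Δ−6)·n + (Δ²−6Δ+3+6/Δ)·(n−1) − F(Δ,Δ). -/
import Mathlib


open Finset

/-- The dual slack function. -/
noncomputable def F (Δ i j : ℕ) : ℝ :=
  (4 * (Δ : ℝ) - 6) * (1 / (i : ℝ) + 1 / (j : ℝ))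
    + (Δ : ℝ) ^ 2 - 6 * (Δ : ℝ) + 3 + 6 / (Δ : ℝ) - ((i : ℝ) - (j : ℝ)) ^ 2

lemma F_symm (Δ i j : ℕ) : F Δ i j = F Δ j i := by simp only [F]; ring

/-- Nonnegativity of F on [1,Δ]², ordered version. -/
lemma F_nonneg_aux {Δ i j : ℕ} (hΔ : 4 ≤ Δ) (hj1 : 1 ≤ j) (hji : j ≤ i) (hiΔ : i ≤ Δ) :
    0 ≤ F Δ i j := by
  set s : ℕ := Δ - (i - j) with hs
  have hs1 : 1 ≤ s := by omega
  have hsΔ : s ≤ Δ := by omega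
  have hjs : j ≤ s := by omega
  have hi1 : 1 ≤ i := le_trans hj1 hji
  have hΔ0 : (0:ℝ) < (Δ:ℝ) := by exact_mod_cast Nat.lt_of_lt_of_le (by norm_num) hΔ
  have hs0 : (0:ℝ) < (s:ℝ) := by exact_mod_cast hs1
  have hi0 : (0:ℝ) < (i:ℝ) := by exact_mod_cast hi1
  have hj0 : (0:ℝ) < (j:ℝ) := by exact_mod_cast hj1
  have hcast : (s:ℝ) = (Δ:ℝ) - ((i:ℝ) - (j:ℝ)) := by
    have : s + (i - j) = Δ := by omega
    have h2 : ((i - j : ℕ) : ℝ) = (i:ℝ) - (j:ℝ) := by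
      push_cast [Nat.cast_sub hji]; ring
    have h3 : ((s + (i-j) : ℕ) : ℝ) = ((Δ:ℕ):ℝ) := by rw [this]
    push_cast at h3
    rw [h2] at h3; linarith
  have hkey : 0 ≤ ((s:ℝ) - 1) * ((s:ℝ) - 2) * (2*(Δ:ℝ) - 3 - (s:ℝ)) := by
    rcases eq_or_lt_of_le hs1 with h1 | h2
    · rw [← h1]; norm_num
    · have hs2 : (2:ℝ) ≤ (s:ℝ) := by exact_mod_cast h2
      have hsr : (s:ℝ) ≤ (Δ:ℝ) := by exact_mod_cast hsΔ
      have hΔ4 : (4:ℝ) ≤ (Δ:ℝ) := by exact_mod_cast hΔ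
      apply mul_nonneg (mul_nonneg (by linarith) (by linarith)) (by linarith)
  have hE : 0 ≤ (4*(Δ:ℝ) - 6) * (1/(Δ:ℝ) + 1/(s:ℝ)) + (Δ:ℝ)^2 - 6*(Δ:ℝ) + 3 + 6/(Δ:ℝ)
      - ((Δ:ℝ) - (s:ℝ))^2 := by
    have heq : (4*(Δ:ℝ) - 6) * (1/(Δ:ℝ) + 1/(s:ℝ)) + (Δ:ℝ)^2 - 6*(Δ:ℝ) + 3 + 6/(Δ:ℝ)
        - ((Δ:ℝ) - (s:ℝ))^2
        = (((s:ℝ) - 1) * ((s:ℝ) - 2) * (2*(Δ:ℝ) - 3 - (s:ℝ))) / (s:ℝ) := by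
      field_simp
      ring
    rw [heq]
    exact div_nonneg hkey (le_of_lt hs0)
  have h1 : 1/(Δ:ℝ) ≤ 1/(i:ℝ) := by
    apply one_div_le_one_div_of_le hi0; exact_mod_cast hiΔ
  have h2 : 1/(s:ℝ) ≤ 1/(j:ℝ) := by
    apply one_div_le_one_div_of_le hj0; exact_mod_cast hjs
  have hA : (0:ℝ) ≤ 4*(Δ:ℝ) - 6 := by
    have : (4:ℝ) ≤ (Δ:ℝ) := by exact_mod_cast hΔ
    linarith
  have hmul := mul_le_mul_of_nonneg_left (add_le_add h1 h2) hA
  have hsq : ((Δ:ℝ) - (s:ℝ))^2 = ((i:ℝ) - (j:ℝ))^2 := by rw [hcast]; ring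
  simp only [F]
  linarith [hmul, hE, hsq.ge, hsq.le]

lemma F_nonneg {Δ i j : ℕ} (hΔ : 4 ≤ Δ) (hi1 : 1 ≤ i) (hiΔ : i ≤ Δ)
    (hj1 : 1 ≤ j) (hjΔ : j ≤ Δ) : 0 ≤ F Δ i j := by
  rcases le_total j i with h | h
  · exact F_nonneg_aux hΔ hj1 h hiΔ
  · rw [F_symm]; exact F_nonneg_aux hΔ hi1 h hjΔ

/-- Every value F(i,t), t∈[1,Δ], is at least min(F(i,2),F(i,Δ)). -/
lemma F_min_bound {Δ i t : ℕ} (hΔ : 4 ≤ Δ) (hi1 : 1 ≤ i) (hiΔ : i ≤ Δ)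
    (ht1 : 1 ≤ t) (htΔ : t ≤ Δ) :
    min (F Δ i 2) (F Δ i Δ) ≤ F Δ i t := by
  have hΔ4 : (4:ℝ) ≤ (Δ:ℝ) := by exact_mod_cast hΔ
  have hΔ0 : (0:ℝ) < (Δ:ℝ) := by linarith
  have hi0 : (0:ℝ) < (i:ℝ) := by exact_mod_cast hi1
  have hir : (i:ℝ) ≤ (Δ:ℝ) := by exact_mod_cast hiΔ
  have ht0 : (0:ℝ) < (t:ℝ) := by exact_mod_cast ht1
  have htr : (t:ℝ) ≤ (Δ:ℝ) := by exact_mod_cast htΔ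
  rcases eq_or_lt_of_le ht1 with h1 | h2
  · refine le_trans (min_le_left _ _) ?_
    rw [← h1]
    have hdiff : F Δ i 1 - F Δ i 2 = 2*((Δ:ℝ) - (i:ℝ)) := by
      simp only [F]; push_cast; ring
    linarith
  · have ht2 : 2 ≤ t := h2
    have ht2r : (2:ℝ) ≤ (t:ℝ) := by exact_mod_cast ht2
    rcases le_or_gt (2*i) (t + Δ) with hcase | hcase
    · refine le_trans (min_le_right _ _) ?_
      have hc : 2*(i:ℝ) ≤ (t:ℝ) + (Δ:ℝ) := by exact_mod_cast hcase
      have hsq : ((i:ℝ) - (Δ:ℝ))^2 - ((i:ℝ)-(t:ℝ))^2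
          = ((Δ:ℝ)-(t:ℝ)) * ((Δ:ℝ)+(t:ℝ)-2*(i:ℝ)) := by ring
      have h1 : 1/(Δ:ℝ) ≤ 1/(t:ℝ) := one_div_le_one_div_of_le ht0 htr
      have hA : (0:ℝ) ≤ 4*(Δ:ℝ) - 6 := by linarith
      have hmul := mul_le_mul_of_nonneg_left h1 hA
      have hprod : 0 ≤ ((Δ:ℝ)-(t:ℝ)) * ((Δ:ℝ)+(t:ℝ)-2*(i:ℝ)) :=
        mul_nonneg (by linarith) (by linarith)
      simp only [F]
      nlinarith [hmul, hprod, hsq]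
    · refine le_trans (min_le_left _ _) ?_
      rcases eq_or_lt_of_le ht2 with h2' | h3
      · rw [← h2']
      · have ht3 : (3:ℝ) ≤ (t:ℝ) := by exact_mod_cast h3
        have hc : (t:ℝ) + (Δ:ℝ) + 1 ≤ 2*(i:ℝ) := by
          have : t + Δ + 1 ≤ 2*i := hcase
          exact_mod_cast this
        rw [← sub_nonneg]
        have heq : F Δ i t - F Δ i 2
            = ((t:ℝ)-2) * (2*(t:ℝ)*(2*(i:ℝ)-(t:ℝ)-2) - (4*(Δ:ℝ)-6)) / (2*(t:ℝ)) := by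
          simp only [F]; push_cast; field_simp; ring
        rw [heq]
        apply div_nonneg _ (by linarith)
        apply mul_nonneg (by linarith)
        nlinarith [hc, ht3, hΔ4]

/-- Lower bound for F(i,j) when j ≤ i. -/
lemma F_ge_gamma {Δ i j : ℕ} (hΔ : 4 ≤ Δ) (hj1 : 1 ≤ j) (hji : j ≤ i) :
    2*(4*(Δ:ℝ)-6)/(i:ℝ) + (Δ:ℝ)^2 - 6*(Δ:ℝ) + 3 + 6/(Δ:ℝ) - ((i:ℝ)-1)^2 ≤ F Δ i j := by
  have hi1 : 1 ≤ i := le_trans hj1 hji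
  have hi0 : (0:ℝ) < (i:ℝ) := by exact_mod_cast hi1
  have hj0 : (0:ℝ) < (j:ℝ) := by exact_mod_cast hj1
  have hj1r : (1:ℝ) ≤ (j:ℝ) := by exact_mod_cast hj1
  have hjir : (j:ℝ) ≤ (i:ℝ) := by exact_mod_cast hji
  have hΔ4 : (4:ℝ) ≤ (Δ:ℝ) := by exact_mod_cast hΔ
  have h2 : 1/(i:ℝ) ≤ 1/(j:ℝ) := one_div_le_one_div_of_le hj0 hjir
  have hA : (0:ℝ) ≤ 4*(Δ:ℝ) - 6 := by linarith
  have hsq : ((i:ℝ)-(j:ℝ))^2 ≤ ((i:ℝ)-1)^2 := by nlinarith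
  have hmul := mul_le_mul_of_nonneg_left h2 hA
  simp only [F]
  have : 2*(4*(Δ:ℝ)-6)/(i:ℝ) = (4*(Δ:ℝ)-6)*(1/(i:ℝ)+1/(i:ℝ)) := by ring
  rw [this]
  nlinarith [hmul, hsq]

private lemma poly2_nonneg {a d : ℝ} (ha : 0 ≤ a) (hd : 0 ≤ d) :
    0 ≤ 128 + 316*d + 128*d^2 + 12*d^3 + a*(152 + 386*d + 124*d^2 + 10*d^3)
      + a^2*(78 + 196*d + 46*d^2 + 2*d^3) + a^3*(20 + 46*d + 6*d^2) + a^4*(2 + 4*d) := by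
  have h1 : 0 ≤ 152 + 386*d + 124*d^2 + 10*d^3 := by positivity
  have h2 : 0 ≤ 78 + 196*d + 46*d^2 + 2*d^3 := by positivity
  have h3 : 0 ≤ 20 + 46*d + 6*d^2 := by positivity
  have h4 : 0 ≤ 2 + 4*d := by positivity
  have h0 : 0 ≤ 128 + 316*d + 128*d^2 + 12*d^3 := by positivity
  have := mul_nonneg ha h1
  have := mul_nonneg (pow_nonneg ha 2) h2
  have := mul_nonneg (pow_nonneg ha 3) h3
  have := mul_nonneg (pow_nonneg ha 4) h4
  linarith

private lemma polyD_nonneg {a d : ℝ} (ha : 0 ≤ a) (hd : 0 ≤ d) :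
    0 ≤ 8 + 112*d + 32*d^2 + a*(40 + 168*d + 32*d^2) + a^2*(96 + 134*d + 20*d^2)
      + a^3*(70 + 48*d + 4*d^2) + a^4*(20 + 6*d) + 2*a^5 := by
  have h1 : 0 ≤ 40 + 168*d + 32*d^2 := by positivity
  have h2 : 0 ≤ 96 + 134*d + 20*d^2 := by positivity
  have h3 : 0 ≤ 70 + 48*d + 4*d^2 := by positivity
  have h4 : 0 ≤ 20 + 6*d := by positivity
  have h0 : 0 ≤ 8 + 112*d + 32*d^2 := by positivity
  have := mul_nonneg ha h1
  have := mul_nonneg (pow_nonneg ha 2) h2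
  have := mul_nonneg (pow_nonneg ha 3) h3
  have := mul_nonneg (pow_nonneg ha 4) h4
  have := pow_nonneg ha 5
  linarith

/-- Combination lemma: star of a vertex of degree i, 3 ≤ i ≤ Δ-1. -/
lemma F_combine {Δ i : ℕ} (hΔ : 4 ≤ Δ) (h3 : 3 ≤ i) (hiΔ : i + 1 ≤ Δ) :
    F Δ Δ Δ ≤ (2*(4*(Δ:ℝ)-6)/(i:ℝ) + (Δ:ℝ)^2 - 6*(Δ:ℝ) + 3 + 6/(Δ:ℝ) - ((i:ℝ)-1)^2)
      + ((i:ℝ)-1) * min (F Δ i 2) (F Δ i Δ) := by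
  have hx : (3:ℝ) ≤ (i:ℝ) := by exact_mod_cast h3
  have hxy : (i:ℝ) + 1 ≤ (Δ:ℝ) := by exact_mod_cast hiΔ
  have hx0 : (0:ℝ) < (i:ℝ) := by linarith
  have hy0 : (0:ℝ) < (Δ:ℝ) := by linarith
  have ha : (0:ℝ) ≤ (i:ℝ) - 3 := by linarith
  have hd : (0:ℝ) ≤ (Δ:ℝ) - (i:ℝ) - 1 := by linarith
  rcases min_cases (F Δ i 2) (F Δ i Δ) with ⟨hmin, _⟩ | ⟨hmin, _⟩ <;> rw [hmin] <;>
    rw [← sub_nonneg]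
  · have heq : (2*(4*(Δ:ℝ)-6)/(i:ℝ) + (Δ:ℝ)^2 - 6*(Δ:ℝ) + 3 + 6/(Δ:ℝ) - ((i:ℝ)-1)^2)
        + ((i:ℝ)-1) * F Δ i 2 - F Δ Δ Δ
        = (128 + 316*((Δ:ℝ)-(i:ℝ)-1) + 128*((Δ:ℝ)-(i:ℝ)-1)^2 + 12*((Δ:ℝ)-(i:ℝ)-1)^3
          + ((i:ℝ)-3)*(152 + 386*((Δ:ℝ)-(i:ℝ)-1) + 124*((Δ:ℝ)-(i:ℝ)-1)^2 + 10*((Δ:ℝ)-(i:ℝ)-1)^3)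
          + ((i:ℝ)-3)^2*(78 + 196*((Δ:ℝ)-(i:ℝ)-1) + 46*((Δ:ℝ)-(i:ℝ)-1)^2 + 2*((Δ:ℝ)-(i:ℝ)-1)^3)
          + ((i:ℝ)-3)^3*(20 + 46*((Δ:ℝ)-(i:ℝ)-1) + 6*((Δ:ℝ)-(i:ℝ)-1)^2)
          + ((i:ℝ)-3)^4*(2 + 4*((Δ:ℝ)-(i:ℝ)-1))) / (2*(i:ℝ)*(Δ:ℝ)) := by
      simp only [F]; push_cast; field_simp; ring
    rw [heq]
    exact div_nonneg (poly2_nonneg ha hd) (by positivity)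
  · have heq : (2*(4*(Δ:ℝ)-6)/(i:ℝ) + (Δ:ℝ)^2 - 6*(Δ:ℝ) + 3 + 6/(Δ:ℝ) - ((i:ℝ)-1)^2)
        + ((i:ℝ)-1) * F Δ i Δ - F Δ Δ Δ
        = (8 + 112*((Δ:ℝ)-(i:ℝ)-1) + 32*((Δ:ℝ)-(i:ℝ)-1)^2
          + ((i:ℝ)-3)*(40 + 168*((Δ:ℝ)-(i:ℝ)-1) + 32*((Δ:ℝ)-(i:ℝ)-1)^2)
          + ((i:ℝ)-3)^2*(96 + 134*((Δ:ℝ)-(i:ℝ)-1) + 20*((Δ:ℝ)-(i:ℝ)-1)^2)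
          + ((i:ℝ)-3)^3*(70 + 48*((Δ:ℝ)-(i:ℝ)-1) + 4*((Δ:ℝ)-(i:ℝ)-1)^2)
          + ((i:ℝ)-3)^4*(20 + 6*((Δ:ℝ)-(i:ℝ)-1)) + 2*((i:ℝ)-3)^5) / (2*(i:ℝ)*(Δ:ℝ)) := by
      simp only [F]; push_cast; field_simp; ring
    rw [heq]
    exact div_nonneg (polyD_nonneg ha hd) (by positivity)

/-- Edges between two vertices of degree ≤ 2 are heavy. -/
lemma F_small {Δ p q : ℕ} (hΔ : 4 ≤ Δ) (hq1 : 1 ≤ q) (hqp : q ≤ p) (hp2 : p ≤ 2) :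
    F Δ Δ Δ ≤ F Δ p q := by
  have hΔ4 : (4:ℝ) ≤ (Δ:ℝ) := by exact_mod_cast hΔ
  have hy0 : (0:ℝ) < (Δ:ℝ) := by linarith
  interval_cases p <;> interval_cases q <;> rw [← sub_nonneg]
  · have heq : F Δ 1 1 - F Δ Δ Δ = ((8*(Δ:ℝ)-12)*((Δ:ℝ)-1)) / (Δ:ℝ) := by
      simp only [F]; push_cast; field_simp; ring
    rw [heq]; apply div_nonneg (by nlinarith) (by linarith)
  · have heq : F Δ 2 1 - F Δ Δ Δ = (6*(Δ:ℝ)^2 - 18*(Δ:ℝ) + 12) / (Δ:ℝ) := by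
      simp only [F]; push_cast; field_simp; ring
    rw [heq]; apply div_nonneg (by nlinarith) (by linarith)
  · have heq : F Δ 2 2 - F Δ Δ Δ = (4*(Δ:ℝ)^2 - 14*(Δ:ℝ) + 12) / (Δ:ℝ) := by
      simp only [F]; push_cast; field_simp; ring
    rw [heq]; apply div_nonneg (by nlinarith) (by linarith)

/-- Weighted handshake lemma. -/
lemma handshake {V : Type*} [Fintype V] [DecidableEq V] (G : SimpleGraph V)
    [DecidableRel G.Adj] {M : Type*} [AddCommMonoid M] (f : V → M)
    (hf : ∀ a b, f a + f b = f b + f a) :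
    ∑ e ∈ G.edgeFinset, Sym2.lift ⟨fun u v => f u + f v, hf⟩ e
      = ∑ v, G.degree v • f v := by
  have step1 : ∀ e ∈ G.edgeFinset,
      Sym2.lift ⟨fun u v => f u + f v, hf⟩ e = ∑ v ∈ univ.filter (· ∈ e), f v := by
    intro e he
    induction e using Sym2.ind with
    | _ a b =>
      have hadj : G.Adj a b := by rwa [SimpleGraph.mem_edgeFinset, SimpleGraph.mem_edgeSet] at he
      have hne : a ≠ b := G.ne_of_adj hadj
      have hfil : univ.filter (· ∈ s(a,b)) = {a, b} := by
        ext x; simp [Sym2.mem_iff]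
      rw [hfil, Finset.sum_pair hne, Sym2.lift_mk]
  rw [Finset.sum_congr rfl step1]
  have step2 : ∀ e ∈ G.edgeFinset,
      ∑ v ∈ univ.filter (· ∈ e), f v = ∑ v, if v ∈ e then f v else 0 := by
    intro e _; rw [Finset.sum_filter]
  rw [Finset.sum_congr rfl step2, Finset.sum_comm]
  refine Finset.sum_congr rfl fun v _ => ?_
  rw [← Finset.sum_filter, Finset.sum_const]
  congr 1
  rw [← SimpleGraph.card_incidenceFinset_eq_degree]
  congr 1
  rw [SimpleGraph.incidenceFinset_eq_filter]

/-- If `Δ ∣ n` and `T` is a tree of order `n` with maximum degree exactly `Δ`,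
then the penalty satisfies `P(T) ≥ F(Δ,Δ)`, and equivalently
`σ(T) ≤ (4Δ−6)n + (Δ²−6Δ+3+6/Δ)(n−1) − F(Δ,Δ)`. -/
theorem penalty_ge_F_DeltaDelta {V : Type*} [Fintype V] [DecidableEq V]
    (G : SimpleGraph V) [DecidableRel G.Adj] (hT : G.IsTree)
    (Δ n : ℕ) (hΔ : 4 ≤ Δ) (hcard : Fintype.card V = n) (hdvd : Δ ∣ n)
    (hmax : ∀ v, G.degree v ≤ Δ) (hex : ∃ v, G.degree v = Δ) :
    F Δ Δ Δ ≤
        ∑ e ∈ G.edgeFinset,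
          Sym2.lift ⟨fun u v => F Δ (G.degree u) (G.degree v),
            by intro a b; simp only [F]; ring⟩ e
      ∧ F Δ Δ Δ = 2 * (4 * (Δ : ℝ) - 6) / (Δ : ℝ)
          + (Δ : ℝ) ^ 2 - 6 * (Δ : ℝ) + 3 + 6 / (Δ : ℝ)
      ∧ ∑ e ∈ G.edgeFinset,
            Sym2.lift ⟨fun u v => ((G.degree u : ℝ) - (G.degree v : ℝ)) ^ 2,
              by intro a b; ring⟩ e
          ≤ (4 * (Δ : ℝ) - 6) * (n : ℝ)
            + ((Δ : ℝ) ^ 2 - 6 * (Δ : ℝ) + 3 + 6 / (Δ : ℝ)) * ((n : ℝ) - 1)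
            - F Δ Δ Δ := by
  obtain ⟨vmax, hvmax⟩ := hex
  have hΔ0 : (0:ℝ) < (Δ:ℝ) := by
    have : 0 < Δ := by omega
    exact_mod_cast this
  -- every vertex has degree at least 1
  have hdeg1 : ∀ w, 1 ≤ G.degree w := by
    intro w
    rw [Nat.one_le_iff_ne_zero, ← Nat.pos_iff_ne_zero, SimpleGraph.degree_pos_iff_exists_adj]
    by_cases hw : w = vmax
    · subst hw
      have : 0 < G.degree w := by omega
      rwa [SimpleGraph.degree_pos_iff_exists_adj] at this
    · obtain ⟨p⟩ := hT.isConnected.preconnected w vmax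
      cases p with
      | nil => exact absurd rfl hw
      | cons h _ => exact ⟨_, h⟩
  set d : V → ℕ := fun v => G.degree v with hd
  -- the penalty sum
  set P : ℝ := ∑ e ∈ G.edgeFinset,
      Sym2.lift ⟨fun u v => F Δ (G.degree u) (G.degree v),
        by intro a b; simp only [F]; ring⟩ e with hP
  have key : F Δ Δ Δ ≤ P := by
    by_contra hcon
    push_neg at hcon
    -- each edge term is nonnegative
    have hFnn : ∀ e ∈ G.edgeFinset, (0:ℝ) ≤
        Sym2.lift ⟨fun u v => F Δ (G.degree u) (G.degree v),
          by intro a b; simp only [F]; ring⟩ e := by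
      intro e _
      induction e using Sym2.ind with
      | _ a b =>
        rw [Sym2.lift_mk]
        exact F_nonneg hΔ (hdeg1 a) (hmax a) (hdeg1 b) (hmax b)
    have hsubS : ∀ S ⊆ G.edgeFinset, (∑ e ∈ S,
        Sym2.lift ⟨fun u v => F Δ (G.degree u) (G.degree v),
          by intro a b; simp only [F]; ring⟩ e) ≤ P := by
      intro S hS
      exact Finset.sum_le_sum_of_subset_of_nonneg hS (fun e he _ => hFnn e he)
    have hsingle : ∀ a b, G.Adj a b → F Δ (G.degree a) (G.degree b) ≤ P := by
      intro a b hadj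
      have hmem : s(a,b) ∈ G.edgeFinset := by
        rw [SimpleGraph.mem_edgeFinset, SimpleGraph.mem_edgeSet]; exact hadj
      have := hsubS {s(a,b)} (Finset.singleton_subset_iff.2 hmem)
      rwa [Finset.sum_singleton, Sym2.lift_mk] at this
    -- no edge with both endpoints of degree < Δ
    have hone : ∀ a b, G.Adj a b → G.degree b ≤ G.degree a → G.degree a < Δ → False := by
      intro a b hadj hba haΔ
      rcases le_or_gt (G.degree a) 2 with hsmall | hbig
      · have := F_small hΔ (hdeg1 b) hba hsmall
        have h2 := hsingle a b hadj
        linarith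
      · -- 3 ≤ deg a ≤ Δ - 1 : use the star of a
        set S := G.incidenceFinset a with hS
        have hmem : s(a,b) ∈ S := by
          rw [hS, SimpleGraph.mem_incidenceFinset]
          exact (SimpleGraph.mk'_mem_incidenceSet_left_iff G).2 hadj
        set m : ℝ := min (F Δ (G.degree a) 2) (F Δ (G.degree a) Δ) with hm
        have hterm : ∀ e ∈ S, m ≤
            Sym2.lift ⟨fun u v => F Δ (G.degree u) (G.degree v),
              by intro a b; simp only [F]; ring⟩ e := by
          intro e he
          rw [hS, SimpleGraph.mem_incidenceFinset] at he
          obtain ⟨heE, haI⟩ := he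
          obtain ⟨w, rfl⟩ := Sym2.mem_iff_exists.1 haI
          rw [Sym2.lift_mk]
          exact F_min_bound hΔ (hdeg1 a) (hmax a) (hdeg1 w) (hmax w)
        have hsplit := (Finset.add_sum_erase S
          (fun e => Sym2.lift ⟨fun u v => F Δ (G.degree u) (G.degree v),
            by intro a b; simp only [F]; ring⟩ e) hmem)
        have hcount : (S.erase s(a,b)).card = G.degree a - 1 := by
          rw [Finset.card_erase_of_mem hmem, hS, SimpleGraph.card_incidenceFinset_eq_degree]
        have hrest : ((G.degree a - 1 : ℕ) : ℝ) * m ≤ ∑ e ∈ S.erase s(a,b),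
            Sym2.lift ⟨fun u v => F Δ (G.degree u) (G.degree v),
              by intro a b; simp only [F]; ring⟩ e := by
          have := Finset.card_nsmul_le_sum (S.erase s(a,b))
            (fun e => Sym2.lift ⟨fun u v => F Δ (G.degree u) (G.degree v),
              by intro a b; simp only [F]; ring⟩ e) m
            (fun e he => hterm e (Finset.mem_of_mem_erase he))
          rwa [hcount, nsmul_eq_mul] at this
        have hcast1 : ((G.degree a - 1 : ℕ) : ℝ) = (G.degree a : ℝ) - 1 := by
          rw [Nat.cast_sub (hdeg1 a)]; norm_num
        have hgam : 2*(4*(Δ:ℝ)-6)/((G.degree a:ℕ):ℝ) + (Δ:ℝ)^2 - 6*(Δ:ℝ) + 3 + 6/(Δ:ℝ)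
            - (((G.degree a:ℕ):ℝ)-1)^2 ≤ F Δ (G.degree a) (G.degree b) :=
          F_ge_gamma hΔ (hdeg1 b) hba
        have hcomb := F_combine hΔ hbig (by omega : G.degree a + 1 ≤ Δ)
        have hfirst : Sym2.lift ⟨fun u v => F Δ (G.degree u) (G.degree v),
            by intro a b; simp only [F]; ring⟩ s(a,b) = F Δ (G.degree a) (G.degree b) := by
          rw [Sym2.lift_mk]
        have hSsub : S ⊆ G.edgeFinset := by
          intro e he
          rw [hS, SimpleGraph.mem_incidenceFinset] at he
          rw [SimpleGraph.mem_edgeFinset]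
          exact he.1
        have hall := hsubS S hSsub
        rw [← hsplit] at hall
        beta_reduce at hall
        rw [hfirst] at hall
        rw [hcast1] at hrest
        linarith
    -- every edge has exactly one endpoint of degree Δ
    have hgood : ∀ a b, G.Adj a b →
        ((if G.degree a = Δ then 1 else 0) + (if G.degree b = Δ then 1 else 0) : ℕ) = 1 := by
      intro a b hadj
      by_cases h1 : G.degree a = Δ <;> by_cases h2 : G.degree b = Δ
      · exfalso
        have := hsingle a b hadj
        rw [h1, h2] at this
        linarith
      · simp [h1, h2]
      · simp [h1, h2]
      · exfalso
        rcases le_total (G.degree b) (G.degree a) with h | h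
        · exact hone a b hadj h (lt_of_le_of_ne (hmax a) h1)
        · exact hone b a hadj.symm h (lt_of_le_of_ne (hmax b) h2)
    -- counting modulo Δ
    set χ : V → ℕ := fun v => if G.degree v = Δ then 1 else 0 with hχ
    have hhs := handshake G χ (fun a b => add_comm _ _)
    have hsum1 : ∑ e ∈ G.edgeFinset,
        Sym2.lift ⟨fun u v => χ u + χ v, fun a b => add_comm _ _⟩ e
        = G.edgeFinset.card := by
      rw [Finset.card_eq_sum_ones]
      refine Finset.sum_congr rfl fun e he => ?_
      induction e using Sym2.ind with
      | _ a b =>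
        rw [Sym2.lift_mk]
        have hadj : G.Adj a b := by
          rwa [SimpleGraph.mem_edgeFinset, SimpleGraph.mem_edgeSet] at he
        exact hgood a b hadj
    have hdvdE : Δ ∣ G.edgeFinset.card := by
      rw [← hsum1, hhs]
      apply Finset.dvd_sum
      intro v _
      rw [smul_eq_mul]
      by_cases h : G.degree v = Δ
      · rw [hχ]
        simp only []
        rw [if_pos h, mul_one, h]
      · simp only [hχ, if_neg h, mul_zero]
        exact dvd_zero _
    have htree := hT.card_edgeFinset
    rw [hcard] at htree
    have hdvd1 : Δ ∣ 1 := by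
      have := (Nat.dvd_add_right hdvdE).mp (htree ▸ hdvd)
      exact this
    have := Nat.le_of_dvd one_pos hdvd1
    omega
  refine ⟨key, ?_, ?_⟩
  · simp only [F]
    have : (Δ:ℝ) ≠ 0 := ne_of_gt hΔ0
    field_simp
    ring
  · -- the equivalent sigma bound
    have hinv := handshake G (fun v => 1/(G.degree v : ℝ)) (fun a b => add_comm _ _)
    have hinvsum : ∑ v, G.degree v • (fun v => 1/(G.degree v : ℝ)) v = (n:ℝ) := by
      rw [← hcard]
      rw [← Finset.card_univ, Finset.card_eq_sum_ones, Nat.cast_sum]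
      refine Finset.sum_congr rfl fun v _ => ?_
      have h0 : (G.degree v : ℝ) ≠ 0 := by
        have := hdeg1 v
        positivity
      simp only [nsmul_eq_mul]
      rw [mul_one_div, div_self h0]
      norm_num
    rw [hinvsum] at hinv
    have htree := hT.card_edgeFinset
    rw [hcard] at htree
    have hEcard : (G.edgeFinset.card : ℝ) = (n:ℝ) - 1 := by
      have : (G.edgeFinset.card : ℝ) + 1 = (n:ℝ) := by exact_mod_cast congrArg Nat.cast htree
      linarith
    -- pointwise decomposition of the squared-difference sum
    have hdecomp : ∀ e ∈ G.edgeFinset,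
        Sym2.lift ⟨fun u v => ((G.degree u : ℝ) - (G.degree v : ℝ)) ^ 2,
          by intro a b; ring⟩ e
        = (4*(Δ:ℝ)-6) * Sym2.lift ⟨fun u v => (fun w => 1/(G.degree w : ℝ)) u
              + (fun w => 1/(G.degree w : ℝ)) v, fun a b => add_comm _ _⟩ e
          + ((Δ:ℝ)^2 - 6*(Δ:ℝ) + 3 + 6/(Δ:ℝ))
          - Sym2.lift ⟨fun u v => F Δ (G.degree u) (G.degree v),
              by intro a b; simp only [F]; ring⟩ e := by
      intro e _
      induction e using Sym2.ind with
      | _ a b =>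
        simp only [Sym2.lift_mk, F]
        ring
    rw [Finset.sum_congr rfl hdecomp]
    rw [Finset.sum_sub_distrib, Finset.sum_add_distrib, ← Finset.mul_sum, Finset.sum_const,
      hinv, nsmul_eq_mul, hEcard]
    rw [← hP]
    have h4 : (4*(Δ:ℝ)-6) * (n:ℝ) = (4*(Δ:ℝ)-6) * (n:ℝ) := rfl
    linarith [key]
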